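/- Let R be a set of infinite partitions of ℕ and let M_R be the union of all dual Ellentuck neighborhoods [t,Z]_m such that R ∩ [t,Z]_m is meager with respect to the dual Ellentuck topology. Then the set M_R ∩ R is meager with respect to the dual Ellentuck topology. -/
import Mathlib


/-- The set of infinite partitions of ℕ, identified with equivalence relations
on ℕ with infinite quotient. -/
abbrev InfPart := {X : Setoid ℕ // Infinite (Quotient X)}

/-- The dual Ellentuck neighborhood `[s,X]_n`: all infinite partitions `Y` such that
`s` is an `n`-segment of `Y` and `Y` is coarser than `X`. -/
def nbhd (n : ℕ) (s : ℕ → ℕ → Prop) (X : InfPart) : Set InfPart :=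
  {Y | (∀ i < n, ∀ j < n, (s i j ↔ Y.1.r i j)) ∧ ∀ a b, X.1.r a b → Y.1.r a b}

/-- The condition for `[s,X]_n` to be a (nonempty-typed) dual Ellentuck neighborhood:
`∀ i j < n, X.r i j → s i j`. -/
def IsNbhd (n : ℕ) (s : ℕ → ℕ → Prop) (X : InfPart) : Prop :=
  ∀ i < n, ∀ j < n, (X.1.r i j → s i j)


/-- The dual Ellentuck topology, generated by the dual Ellentuck neighborhoods. -/
instance dualEllentuck : TopologicalSpace InfPart :=
  TopologicalSpace.generateFrom
    {U | ∃ (n : ℕ) (s : ℕ → ℕ → Prop) (X : InfPart), IsNbhd n s X ∧ U = nbhd n s X}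


/-- The union of all dual Ellentuck neighborhoods in which R is meager. -/
def MR (R : Set InfPart) : Set InfPart :=
  {Y | ∃ (m : ℕ) (t : ℕ → ℕ → Prop) (Z : InfPart),
    IsNbhd m t Z ∧ IsMeagre (R ∩ nbhd m t Z) ∧ Y ∈ nbhd m t Z}


open Set Topology

/-- The Banach category theorem: if `A` meets every member of a family `𝒰` of open
sets in a meagre set, then `A ∩ ⋃₀ 𝒰` is meagre. -/
theorem banach_category {α : Type*} [TopologicalSpace α] {A : Set α} {𝒰 : Set (Set α)}
    (hop : ∀ U ∈ 𝒰, IsOpen U) (hm : ∀ U ∈ 𝒰, IsMeagre (A ∩ U)) :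
    IsMeagre (A ∩ ⋃₀ 𝒰) := by
  classical
  -- the collection of pairwise disjoint families of open sets refining 𝒰
  set P : Set (Set (Set α)) :=
    {𝒱 | (∀ V ∈ 𝒱, IsOpen V ∧ ∃ U ∈ 𝒰, V ⊆ U) ∧ 𝒱.PairwiseDisjoint id} with hP
  obtain ⟨𝒱, h𝒱max⟩ : ∃ 𝒱, Maximal (· ∈ P) 𝒱 := by
    apply zorn_subset
    intro c hcP hchain
    refine ⟨⋃₀ c, ⟨?_, ?_⟩, fun s hs => subset_sUnion_of_mem hs⟩
    · rintro V ⟨𝒲, h𝒲, hV⟩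
      exact (hcP h𝒲).1 V hV
    · rintro V ⟨𝒲, h𝒲, hV⟩ V' ⟨𝒲', h𝒲', hV'⟩ hne
      rcases hchain.total h𝒲 h𝒲' with h | h
      · exact (hcP h𝒲').2 (h hV) hV' hne
      · exact (hcP h𝒲).2 hV (h hV') hne
  have h𝒱 := h𝒱max.1
  have hVopen : ∀ V ∈ 𝒱, IsOpen V := fun V hV => (h𝒱.1 V hV).1
  -- density of ⋃₀ 𝒱 in ⋃₀ 𝒰, by maximality
  have hdense : ⋃₀ 𝒰 ⊆ closure (⋃₀ 𝒱) := by
    rintro x ⟨U, hU, hxU⟩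
    by_contra hx
    set V₀ : Set α := U ∩ (closure (⋃₀ 𝒱))ᶜ with hV₀
    have hV₀x : x ∈ V₀ := ⟨hxU, hx⟩
    have hV₀𝒱 : ∀ V ∈ 𝒱, Disjoint V₀ V := by
      intro V hV
      refine Set.disjoint_left.2 fun y hy hyV => hy.2 ?_
      exact subset_closure ⟨V, hV, hyV⟩
    have hins : insert V₀ 𝒱 ∈ P := by
      constructor
      · rintro V (rfl | hV)
        · exact ⟨(hop U hU).inter (isClosed_closure.isOpen_compl), U, hU, inter_subset_left⟩
        · exact h𝒱.1 V hV
      · exact h𝒱.2.insert fun V hV _ => hV₀𝒱 V hV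
    have : V₀ ∈ 𝒱 := h𝒱max.2 hins (subset_insert _ _) (mem_insert _ _)
    exact absurd hV₀x (Set.disjoint_left.1 (hV₀𝒱 V₀ this) hV₀x)
  -- choose countable nowhere dense covers of A ∩ V for V ∈ 𝒱
  have hcov : ∀ V ∈ 𝒱, ∃ f : ℕ → Set α,
      (∀ n, IsNowhereDense (f n)) ∧ A ∩ V ⊆ ⋃ n, f n := by
    intro V hV
    obtain ⟨U, hU, hVU⟩ := (h𝒱.1 V hV).2
    have : IsMeagre (A ∩ V) := (hm U hU).mono (inter_subset_inter_right _ hVU)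
    rw [isMeagre_iff_countable_union_isNowhereDense] at this
    obtain ⟨S, hSnd, hScnt, hScov⟩ := this
    obtain ⟨f, hf⟩ := (hScnt.insert ∅).exists_eq_range (insert_nonempty _ _)
    refine ⟨f, ?_, ?_⟩
    · intro n
      have : f n ∈ insert ∅ S := hf ▸ mem_range_self n
      rcases this with h | h
      · rw [h]; exact isNowhereDense_empty
      · exact hSnd _ h
    · intro x hx
      obtain ⟨t, ht, hxt⟩ := hScov hx
      have : t ∈ range f := hf ▸ mem_insert_of_mem _ ht
      obtain ⟨n, rfl⟩ := this
      exact mem_iUnion.2 ⟨n, hxt⟩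
  choose! f hfnd hfcov using hcov
  -- the sets E n
  set E : ℕ → Set α := fun n => ⋃ V ∈ 𝒱, f V n ∩ V with hE
  have hEnd : ∀ n, IsNowhereDense (E n) := by
    intro n
    rw [IsNowhereDense, eq_empty_iff_forall_notMem]
    intro x hx
    have hxcl : x ∈ closure (E n) := interior_subset hx
    obtain ⟨y, hy, hyE⟩ := (mem_closure_iff.1 hxcl) _ isOpen_interior hx
    obtain ⟨V, hyfV, hV, hyV⟩ : ∃ V, y ∈ f V n ∧ V ∈ 𝒱 ∧ y ∈ V := by simpa [hE] using hyE
    -- the open set interior (closure (E n)) ∩ V lies in closure (f V n)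
    have hsub : interior (closure (E n)) ∩ V ⊆ closure (f V n) := by
      intro z hz
      rw [mem_closure_iff]
      intro o ho hzo
      have hz' : z ∈ closure (E n) := interior_subset hz.1
      obtain ⟨w, hw, hwE⟩ := (mem_closure_iff.1 hz') (o ∩ V ∩ interior (closure (E n)))
        ((ho.inter (hVopen V hV)).inter isOpen_interior) ⟨⟨hzo, hz.2⟩, hz.1⟩
      obtain ⟨V', hwfV', hV', hwV'⟩ : ∃ V', w ∈ f V' n ∧ V' ∈ 𝒱 ∧ w ∈ V' := by simpa [hE] using hwE
      have : V' = V := by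
        by_contra hne
        exact Set.disjoint_left.1 (h𝒱.2 hV' hV hne) hwV' hw.1.2
      exact ⟨w, hw.1.1, this ▸ hwfV'⟩
    have : interior (closure (E n)) ∩ V ⊆ interior (closure (f V n)) :=
      interior_maximal hsub (isOpen_interior.inter (hVopen V hV))
    rw [hfnd V hV n] at this
    exact this ⟨hy, hyV⟩ |>.elim
  -- the frontier of ⋃₀ 𝒱 is nowhere dense
  have hopen𝒱 : IsOpen (⋃₀ 𝒱) := isOpen_sUnion hVopen
  have hfr : IsNowhereDense (frontier (⋃₀ 𝒱)) := by
    rw [IsClosed.isNowhereDense_iff isClosed_frontier, ← frontier_compl]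
    exact interior_frontier (isClosed_compl_iff.2 hopen𝒱)
  -- conclude
  rw [isMeagre_iff_countable_union_isNowhereDense]
  refine ⟨insert (frontier (⋃₀ 𝒱)) (range E), ?_, ?_, ?_⟩
  · rintro t (rfl | ⟨n, rfl⟩)
    · exact hfr
    · exact hEnd n
  · exact (countable_range E).insert _
  · rintro x ⟨hxA, hxU⟩
    by_cases hx : x ∈ ⋃₀ 𝒱
    · obtain ⟨V, hV, hxV⟩ := hx
      obtain ⟨n, hn⟩ := mem_iUnion.1 (hfcov V hV ⟨hxA, hxV⟩)
      exact ⟨E n, mem_insert_of_mem _ (mem_range_self n), mem_iUnion.2 ⟨V, mem_iUnion.2 ⟨hV, hn, hxV⟩⟩⟩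
    · refine ⟨frontier (⋃₀ 𝒱), mem_insert _ _, ?_⟩
      rw [hopen𝒱.frontier_eq]
      exact ⟨hdense hxU, hx⟩

/-- The set M_R ∩ R is meager in the dual Ellentuck topology. -/
theorem isMeagre_MR_inter (R : Set InfPart) : IsMeagre (MR R ∩ R) := by
  set 𝒰 : Set (Set InfPart) :=
    {U | ∃ (m : ℕ) (t : ℕ → ℕ → Prop) (Z : InfPart),
      IsNbhd m t Z ∧ IsMeagre (R ∩ nbhd m t Z) ∧ U = nbhd m t Z} with h𝒰
  have hsub : MR R ∩ R ⊆ R ∩ ⋃₀ 𝒰 := by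
    rintro Y ⟨⟨m, t, Z, h1, h2, h3⟩, hR⟩
    exact ⟨hR, nbhd m t Z, ⟨m, t, Z, h1, h2, rfl⟩, h3⟩
  refine (banach_category ?_ ?_).mono hsub
  · rintro U ⟨m, t, Z, h1, _, rfl⟩
    exact TopologicalSpace.isOpen_generateFrom_of_mem ⟨m, t, Z, h1, rfl⟩
  · rintro U ⟨m, t, Z, _, h2, rfl⟩
    exact h2
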